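/- Let U be m-strongly convex with M-Lipschitz gradient, and suppose a one-step numerical integrator satisfies, for every input (q,p), ‖q^◇_η(q,p) − q_η(q,p)‖₂ ≤ η³ε₁ and ‖p^◇_η(q,p) − p_η(q,p)‖₂ ≤ η³ε₂, where (q_t,p_t) is the exact Hamiltonian flow. Then for η ≤ T ≤ (1/6)√m/M with T/η ∈ ℕ, the composition of T/η steps of the integrator satisfies ‖q^◇◇_T(q,p) − q_T(q,p)‖₂ ≤ T η² (ε₁ + ε₂/√M) e and ‖p^◇◇_T(q,p) − p_T(q,p)‖₂ ≤ T η² (ε₁ + ε₂/√M) e √M. -/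

import Mathlib

open Real
open scoped InnerProductSpace

/-- Perturbation bound for two exact solutions of the Hamiltonian ODE. -/
lemma ham_pert {d : ℕ} (gU : EuclideanSpace ℝ (Fin d) → EuclideanSpace ℝ (Fin d))
    (M : ℝ) (hM : 0 < M)
    (hlip : ∀ x y, ‖gU x - gU y‖ ≤ M * ‖x - y‖)
    (x v y w : ℝ → EuclideanSpace ℝ (Fin d))
    (hx : ∀ t, HasDerivAt x (v t) t) (hv : ∀ t, HasDerivAt v (-gU (x t)) t)
    (hy : ∀ t, HasDerivAt y (w t) t) (hw : ∀ t, HasDerivAt w (-gU (y t)) t)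
    (t : ℝ) (ht : 0 ≤ t) :
    ‖(x t - y t, (Real.sqrt M)⁻¹ • (v t - w t))‖ ≤
      ‖(x 0 - y 0, (Real.sqrt M)⁻¹ • (v 0 - w 0))‖ * Real.exp (Real.sqrt M * t) := by
  have hsM : 0 < Real.sqrt M := Real.sqrt_pos.2 hM
  have hMM : Real.sqrt M * Real.sqrt M = M := Real.mul_self_sqrt hM.le
  have hnorm : ∀ a b : EuclideanSpace ℝ (Fin d),
      ‖((a, (Real.sqrt M)⁻¹ • b) : EuclideanSpace ℝ (Fin d) × EuclideanSpace ℝ (Fin d))‖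
      = max ‖a‖ ((Real.sqrt M)⁻¹ * ‖b‖) := by
    intro a b
    rw [Prod.norm_def, norm_smul, norm_inv, Real.norm_eq_abs,
      abs_of_nonneg (Real.sqrt_nonneg M)]
  set g : ℝ → EuclideanSpace ℝ (Fin d) × EuclideanSpace ℝ (Fin d) :=
    fun s => (x s - y s, (Real.sqrt M)⁻¹ • (v s - w s)) with hg
  set g' : ℝ → EuclideanSpace ℝ (Fin d) × EuclideanSpace ℝ (Fin d) :=
    fun s => (v s - w s, (Real.sqrt M)⁻¹ • (-gU (x s) - -gU (y s))) with hg'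
  have hder : ∀ s, HasDerivAt g (g' s) s := by
    intro s
    exact ((hx s).sub (hy s)).prodMk ((((hv s).sub (hw s)).const_smul (Real.sqrt M)⁻¹))
  have key := norm_le_gronwallBound_of_norm_deriv_right_le (f := g) (f' := g')
    (δ := ‖g 0‖) (K := Real.sqrt M) (ε := 0) (a := 0) (b := t)
    (fun s _ => (hder s).continuousAt.continuousWithinAt)
    (fun s _ => (hder s).hasDerivWithinAt) le_rfl ?_ t (by constructor <;> simp [ht])
  · simpa only [gronwallBound_ε0, sub_zero] using key
  · intro s _
    rw [add_zero]
    show ‖g' s‖ ≤ _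
    rw [hg, hg']
    simp only
    rw [hnorm, hnorm, max_le_iff]
    constructor
    · calc ‖v s - w s‖ = Real.sqrt M * ((Real.sqrt M)⁻¹ * ‖v s - w s‖) := by
            field_simp
        _ ≤ Real.sqrt M * max ‖x s - y s‖ ((Real.sqrt M)⁻¹ * ‖v s - w s‖) :=
            mul_le_mul_of_nonneg_left (le_max_right _ _) hsM.le
    · have hb : ‖-gU (x s) - -gU (y s)‖ ≤ M * ‖x s - y s‖ := by
        rw [neg_sub_neg, norm_sub_rev]
        exact hlip _ _
      calc (Real.sqrt M)⁻¹ * ‖-gU (x s) - -gU (y s)‖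
          ≤ (Real.sqrt M)⁻¹ * (M * ‖x s - y s‖) :=
            mul_le_mul_of_nonneg_left hb (inv_nonneg.2 hsM.le)
        _ = Real.sqrt M * ‖x s - y s‖ := by
            field_simp; linear_combination (-‖x s - y s‖) * hMM
        _ ≤ Real.sqrt M * max ‖x s - y s‖ ((Real.sqrt M)⁻¹ * ‖v s - w s‖) :=
            mul_le_mul_of_nonneg_left (le_max_left _ _) hsM.le


/-- global error bound for the composition of `T/η` steps of a
one-step integrator with third-order local error, for the Hamiltonian flow of an
`m`-strongly convex potential with `M`-Lipschitz gradient. -/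
theorem integrator_global_error {d : ℕ}
    (U : EuclideanSpace ℝ (Fin d) → ℝ)
    (gU : EuclideanSpace ℝ (Fin d) → EuclideanSpace ℝ (Fin d))
    (hU : ∀ x, HasGradientAt U (gU x) x)
    (m M : ℝ) (hm : 0 < m) (hmM : m ≤ M)
    (hconv : ∀ x y, m * ‖x - y‖^2 ≤ ⟪gU x - gU y, x - y⟫_ℝ)
    (hlip : ∀ x y, ‖gU x - gU y‖ ≤ M * ‖x - y‖)
    -- exact Hamiltonian flow from initial position `q` and momentum `p`
    (Q P : EuclideanSpace ℝ (Fin d) → EuclideanSpace ℝ (Fin d) → ℝ → EuclideanSpace ℝ (Fin d))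
    (hQ0 : ∀ q p, Q q p 0 = q) (hP0 : ∀ q p, P q p 0 = p)
    (hQ : ∀ q p t, HasDerivAt (Q q p) (P q p t) t)
    (hP : ∀ q p t, HasDerivAt (P q p) (-gU (Q q p t)) t)
    -- one step of the numerical integrator, with local error bounds
    (Φ : EuclideanSpace ℝ (Fin d) × EuclideanSpace ℝ (Fin d) →
          EuclideanSpace ℝ (Fin d) × EuclideanSpace ℝ (Fin d))
    (η T ε₁ ε₂ : ℝ) (hη : 0 < η) (hε₁ : 0 ≤ ε₁) (hε₂ : 0 ≤ ε₂)
    (hloc1 : ∀ z, ‖(Φ z).1 - Q z.1 z.2 η‖ ≤ η^3 * ε₁)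
    (hloc2 : ∀ z, ‖(Φ z).2 - P z.1 z.2 η‖ ≤ η^3 * ε₂)
    (hT1 : η ≤ T) (hT2 : T ≤ (1/6) * Real.sqrt m / M)
    (n : ℕ) (hn : T = n * η)
    (q p : EuclideanSpace ℝ (Fin d)) :
    ‖(Φ^[n] (q, p)).1 - Q q p T‖ ≤ T * η^2 * (ε₁ + ε₂ / Real.sqrt M) * Real.exp 1 ∧
    ‖(Φ^[n] (q, p)).2 - P q p T‖ ≤
      T * η^2 * (ε₁ + ε₂ / Real.sqrt M) * Real.exp 1 * Real.sqrt M := by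
  have hM : 0 < M := hm.trans_le hmM
  have hsM : 0 < Real.sqrt M := Real.sqrt_pos.2 hM
  have hMM : Real.sqrt M * Real.sqrt M = M := Real.mul_self_sqrt hM.le
  have hnorm : ∀ a b : EuclideanSpace ℝ (Fin d),
      ‖((a, (Real.sqrt M)⁻¹ • b) : EuclideanSpace ℝ (Fin d) × EuclideanSpace ℝ (Fin d))‖
      = max ‖a‖ ((Real.sqrt M)⁻¹ * ‖b‖) := by
    intro a b
    rw [Prod.norm_def, norm_smul, norm_inv, Real.norm_eq_abs,
      abs_of_nonneg (Real.sqrt_nonneg M)]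
  set L : ℝ := η^3 * (ε₁ + ε₂ / Real.sqrt M) with hL
  have hL0 : 0 ≤ L := by positivity
  -- main induction
  have main : ∀ k : ℕ,
      ‖(((Φ^[k] (q, p)).1 - Q q p (k * η),
        (Real.sqrt M)⁻¹ • ((Φ^[k] (q, p)).2 - P q p (k * η))) :
        EuclideanSpace ℝ (Fin d) × EuclideanSpace ℝ (Fin d))‖
        ≤ L * k * Real.exp (Real.sqrt M * (k * η)) := by
    intro k
    induction k with
    | zero =>
      simp [hQ0, hP0, Prod.norm_def]
    | succ k ih =>
      set w : EuclideanSpace ℝ (Fin d) × EuclideanSpace ℝ (Fin d) := Φ^[k] (q, p) with hw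
      have hiter : Φ^[k+1] (q, p) = Φ w := by
        rw [Function.iterate_succ_apply']
      -- local error piece
      have hlocmax :
          ‖(((Φ w).1 - Q w.1 w.2 η, (Real.sqrt M)⁻¹ • ((Φ w).2 - P w.1 w.2 η)) :
            EuclideanSpace ℝ (Fin d) × EuclideanSpace ℝ (Fin d))‖ ≤ L := by
        rw [hnorm, max_le_iff]
        constructor
        · refine (hloc1 w).trans ?_
          rw [hL]
          have : (0:ℝ) ≤ η^3 * (ε₂ / Real.sqrt M) := by positivity
          nlinarith
        · calc (Real.sqrt M)⁻¹ * ‖(Φ w).2 - P w.1 w.2 η‖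
              ≤ (Real.sqrt M)⁻¹ * (η^3 * ε₂) :=
                mul_le_mul_of_nonneg_left (hloc2 w) (inv_nonneg.2 hsM.le)
            _ = η^3 * (ε₂ / Real.sqrt M) := by ring
            _ ≤ L := by
                rw [hL]
                have : (0:ℝ) ≤ η^3 * ε₁ := by positivity
                nlinarith
      -- propagation piece
      have hy' : ∀ t, HasDerivAt (fun t => Q q p (t + k * η)) (P q p (t + k * η)) t :=
        fun t => HasDerivAt.comp_add_const t _ (hQ q p (t + k * η))
      have hw' : ∀ t, HasDerivAt (fun t => P q p (t + k * η)) (-gU (Q q p (t + k * η))) t :=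
        fun t => HasDerivAt.comp_add_const t _ (hP q p (t + k * η))
      have hpert := ham_pert gU M hM hlip (Q w.1 w.2) (P w.1 w.2)
        (fun t => Q q p (t + k * η)) (fun t => P q p (t + k * η))
        (hQ w.1 w.2) (hP w.1 w.2) hy' hw' η hη.le
      simp only [hQ0, hP0, zero_add] at hpert
      -- combine
      have hsplit :
          (((Φ^[k+1] (q, p)).1 - Q q p ((k+1 : ℕ) * η),
            (Real.sqrt M)⁻¹ • ((Φ^[k+1] (q, p)).2 - P q p ((k+1 : ℕ) * η))) :
            EuclideanSpace ℝ (Fin d) × EuclideanSpace ℝ (Fin d))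
          = ((Φ w).1 - Q w.1 w.2 η, (Real.sqrt M)⁻¹ • ((Φ w).2 - P w.1 w.2 η))
            + (Q w.1 w.2 η - Q q p (η + k * η),
               (Real.sqrt M)⁻¹ • (P w.1 w.2 η - P q p (η + k * η))) := by
        rw [hiter]
        have ht : ((k+1 : ℕ) : ℝ) * η = η + k * η := by push_cast; ring
        rw [ht]
        rw [Prod.mk_add_mk, ← smul_add]
        congr 1
        · abel
        · congr 1; abel
      have tri := norm_add_le
        (((Φ w).1 - Q w.1 w.2 η, (Real.sqrt M)⁻¹ • ((Φ w).2 - P w.1 w.2 η)) :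
          EuclideanSpace ℝ (Fin d) × EuclideanSpace ℝ (Fin d))
        ((Q w.1 w.2 η - Q q p (η + k * η),
          (Real.sqrt M)⁻¹ • (P w.1 w.2 η - P q p (η + k * η))))
      rw [← hsplit] at tri
      have hprop : ‖((Q w.1 w.2 η - Q q p (η + k * η),
            (Real.sqrt M)⁻¹ • (P w.1 w.2 η - P q p (η + k * η))) :
            EuclideanSpace ℝ (Fin d) × EuclideanSpace ℝ (Fin d))‖
          ≤ (L * k * Real.exp (Real.sqrt M * (k * η))) * Real.exp (Real.sqrt M * η) := by
        refine hpert.trans ?_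
        exact mul_le_mul_of_nonneg_right ih (Real.exp_nonneg _)
      have hexp : Real.exp (Real.sqrt M * (k * η)) * Real.exp (Real.sqrt M * η)
          = Real.exp (Real.sqrt M * ((k+1 : ℕ) * η)) := by
        rw [← Real.exp_add]; congr 1; push_cast; ring
      calc ‖(((Φ^[k+1] (q, p)).1 - Q q p ((k+1 : ℕ) * η),
            (Real.sqrt M)⁻¹ • ((Φ^[k+1] (q, p)).2 - P q p ((k+1 : ℕ) * η))) :
            EuclideanSpace ℝ (Fin d) × EuclideanSpace ℝ (Fin d))‖
          ≤ L + (L * k * Real.exp (Real.sqrt M * (k * η))) * Real.exp (Real.sqrt M * η) :=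
            tri.trans (add_le_add hlocmax hprop)
        _ = L + L * k * Real.exp (Real.sqrt M * ((k+1 : ℕ) * η)) := by
            rw [mul_assoc, hexp]
        _ ≤ L * Real.exp (Real.sqrt M * ((k+1 : ℕ) * η))
              + L * k * Real.exp (Real.sqrt M * ((k+1 : ℕ) * η)) := by
            have h1 : (1:ℝ) ≤ Real.exp (Real.sqrt M * ((k+1 : ℕ) * η)) := by
              apply Real.one_le_exp; positivity
            nlinarith
        _ = L * (k+1 : ℕ) * Real.exp (Real.sqrt M * ((k+1 : ℕ) * η)) := by
            push_cast; ring
  -- conclude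
  have hmain := main n
  rw [← hn] at hmain
  have hTe : Real.sqrt M * T ≤ 1 := by
    have hT0 : 0 ≤ T := le_trans hη.le hT1
    have h1 : Real.sqrt M * T ≤ Real.sqrt M * ((1/6) * Real.sqrt m / M) :=
      mul_le_mul_of_nonneg_left hT2 hsM.le
    refine h1.trans ?_
    have hmm : Real.sqrt m ≤ Real.sqrt M := Real.sqrt_le_sqrt hmM
    have hm0 : 0 ≤ Real.sqrt m := Real.sqrt_nonneg m
    have heq : Real.sqrt M * (1/6 * Real.sqrt m / M) = (Real.sqrt M * Real.sqrt m / 6) / M := by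
      ring
    rw [heq, div_le_one hM]
    nlinarith [hMM, mul_le_mul_of_nonneg_left hmm hsM.le]
  have hbound : L * n * Real.exp (Real.sqrt M * T)
      ≤ T * η^2 * (ε₁ + ε₂ / Real.sqrt M) * Real.exp 1 := by
    have h1 : Real.exp (Real.sqrt M * T) ≤ Real.exp 1 := Real.exp_le_exp.2 hTe
    have h2 : L * n = T * η^2 * (ε₁ + ε₂ / Real.sqrt M) := by
      rw [hL, hn]; ring
    rw [h2]
    have h3 : 0 ≤ T * η^2 * (ε₁ + ε₂ / Real.sqrt M) := by
      have hT0 : 0 ≤ T := le_trans hη.le hT1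
      positivity
    exact mul_le_mul_of_nonneg_left h1 h3
  have hfin := hmain.trans hbound
  rw [hnorm] at hfin
  constructor
  · exact (le_max_left _ _).trans hfin
  · have h2 : (Real.sqrt M)⁻¹ * ‖(Φ^[n] (q, p)).2 - P q p T‖
        ≤ T * η^2 * (ε₁ + ε₂ / Real.sqrt M) * Real.exp 1 :=
      (le_max_right _ _).trans hfin
    calc ‖(Φ^[n] (q, p)).2 - P q p T‖
        = Real.sqrt M * ((Real.sqrt M)⁻¹ * ‖(Φ^[n] (q, p)).2 - P q p T‖) := by
          field_simp
      _ ≤ Real.sqrt M * (T * η^2 * (ε₁ + ε₂ / Real.sqrt M) * Real.exp 1) :=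
          mul_le_mul_of_nonneg_left h2 hsM.le
      _ = T * η^2 * (ε₁ + ε₂ / Real.sqrt M) * Real.exp 1 * Real.sqrt M := by ring
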